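/- Let P and Q be probability measures on a measurable space X and let F be a convex set of measurable functions with F ⊆ L²(P) ∩ L¹(Q), f ∈ F ⟹ −f ∈ F, closed and bounded as a subset of L²(P). Let δ_min be the infimum of IPM_F(Q, R) over all finite signed measures R with R ≪ P, dR/dP ∈ L²(P), and R(X) = 1, and let δ > δ_min. Suppose R* attains the infimum of D₂(R‖P) over all such R satisfying additionally IPM_F(Q, R) ≤ δ. Then there exists μ ≥ 0 such that μ·(IPM_F(Q, R*) − δ) = 0 and, for every finite signed measure R with R ≪ P, dR/dP ∈ L²(P), and R(X) = 1, D₂(R*‖P) + μ·IPM_F(Q, R*) ≤ D₂(R‖P) + μ·IPM_F(Q, R). -/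

import Mathlib

open MeasureTheory

section AuxStmt16

variable {X : Type*} [MeasurableSpace X] {P : Measure X}

private lemma stmt16_int_mul {f w : X → ℝ} (hf : MemLp f 2 P) (hw : MemLp w 2 P) :
    Integrable (fun x => f x * w x) P := by
  have h := MeasureTheory.L2.integrable_inner (𝕜 := ℝ) (hf.toLp f) (hw.toLp w)
  refine h.congr ?_
  filter_upwards [hf.coeFn_toLp, hw.coeFn_toLp] with x h1 h2
  simp [h1, h2, mul_comm]

private lemma stmt16_cs {f w : X → ℝ} (hf : MemLp f 2 P) (hw : MemLp w 2 P) :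
    |∫ x, f x * w x ∂P| ≤ ‖hf.toLp f‖ * ‖hw.toLp w‖ := by
  have h := abs_real_inner_le_norm (hf.toLp f) (hw.toLp w)
  rw [MeasureTheory.L2.inner_def] at h
  have he : (∫ a, (inner ℝ ((hf.toLp f : Lp ℝ 2 P) a) ((hw.toLp w : Lp ℝ 2 P) a) : ℝ) ∂P)
      = ∫ x, f x * w x ∂P := by
    refine integral_congr_ae ?_
    filter_upwards [hf.coeFn_toLp, hw.coeFn_toLp] with x h1 h2
    simp [h1, h2, mul_comm]
  rwa [he] at h

end AuxStmt16

/-- existence of a Lagrange multiplier turning the IPM-constrained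
balancing-weights problem into the penalized problem.  Finite signed measures `R ≪ P`
with `dR/dP ∈ L²(P)` and `R(X) = 1` are encoded by their densities `w`; `F` is convex,
symmetric, contained in `L²(P) ∩ L¹(Q)`, and closed and bounded as a subset of `L²(P)`
(formalized via its image in the space `Lp ℝ 2 P` of a.e.-classes).  `IPM_F(Q,R)` is taken
in `EReal`, `δ_min` is its infimum over all feasible densities, and `δ > δ_min`.  If `R*`
minimizes `D₂(R‖P)` subject to `IPM_F(Q,R) ≤ δ`, then some `μ ≥ 0` satisfies complementary
slackness `μ·(IPM_F(Q,R*) − δ) = 0` and makes `R*` optimal for the penalized objective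
`D₂(R‖P) + μ·IPM_F(Q,R)`. -/
theorem stmt_16 {X : Type*} [MeasurableSpace X] (P Q : Measure X)
    [IsProbabilityMeasure P] [IsProbabilityMeasure Q]
    (F : Set (X → ℝ)) (hconv : Convex ℝ F)
    (hF : ∀ f ∈ F, MemLp f 2 P ∧ Integrable f Q)
    (hsymm : ∀ f ∈ F, -f ∈ F)
    (hclosed : IsClosed {g : Lp ℝ 2 P | ∃ f ∈ F, (g : X → ℝ) =ᵐ[P] f})
    (hbdd : Bornology.IsBounded {g : Lp ℝ 2 P | ∃ f ∈ F, (g : X → ℝ) =ᵐ[P] f})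
    (IPM : (X → ℝ) → EReal)
    (hIPM : IPM = fun w => ⨆ f ∈ F, (((∫ x, f x ∂Q) - ∫ x, f x * w x ∂P : ℝ) : EReal))
    (D2 : (X → ℝ) → ℝ) (hD2 : D2 = fun w => ∫ x, ((w x) ^ 2 - 1) ∂P)
    (δmin : EReal)
    (hδmin : δmin = ⨅ w ∈ {w : X → ℝ | MemLp w 2 P ∧ (∫ x, w x ∂P) = 1}, IPM w)
    (δ : ℝ) (hδ : δmin < (δ : EReal))
    (wstar : X → ℝ) (hw2 : MemLp wstar 2 P) (hw1 : (∫ x, wstar x ∂P) = 1)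
    (hwipm : IPM wstar ≤ (δ : EReal))
    (hmin : ∀ w : X → ℝ, MemLp w 2 P → (∫ x, w x ∂P) = 1 → IPM w ≤ (δ : EReal) →
      D2 wstar ≤ D2 w) :
    ∃ μ : ℝ, 0 ≤ μ ∧
      -- complementary slackness
      (μ : EReal) * (IPM wstar - (δ : EReal)) = 0 ∧
      -- optimality for the penalized problem over all feasible densities
      (∀ w : X → ℝ, MemLp w 2 P → (∫ x, w x ∂P) = 1 →
        ((D2 wstar : ℝ) : EReal) + (μ : EReal) * IPM wstar ≤
          ((D2 w : ℝ) : EReal) + (μ : EReal) * IPM w) := by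
  classical
  -- abbreviation for the linear functional inside the sup
  set V : (X → ℝ) → (X → ℝ) → ℝ :=
    fun f w => (∫ x, f x ∂Q) - ∫ x, f x * w x ∂P with hV
  have hIPM' : ∀ w, IPM w = ⨆ f ∈ F, ((V f w : ℝ) : EReal) := by
    intro w; rw [hIPM]
  rcases F.eq_empty_or_nonempty with hFe | ⟨f0, hf0⟩
  · -- F empty : everything is ⊥, take μ = 0
    refine ⟨0, le_refl 0, ?_, ?_⟩
    · rw [EReal.coe_zero, EReal.zero_mul]
    · intro w hw hwint
      have hD : D2 wstar ≤ D2 w := by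
        refine hmin w hw hwint ?_
        rw [hIPM', hFe]
        simp
      rw [EReal.coe_zero, EReal.zero_mul, EReal.zero_mul, add_zero, add_zero]
      exact EReal.coe_le_coe_iff.2 hD
  -- F nonempty
  obtain ⟨C, hC⟩ := hbdd.exists_norm_le
  -- norm bound on elements of F
  have hnorm : ∀ f (hf : f ∈ F), ‖((hF f hf).1.toLp f : Lp ℝ 2 P)‖ ≤ C := by
    intro f hf
    exact hC _ ⟨f, hf, (hF f hf).1.coeFn_toLp⟩
  -- each V f wstar is bounded by δ in absolute value
  have hVstar_le : ∀ f ∈ F, V f wstar ≤ δ := by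
    intro f hf
    have h1 : ((V f wstar : ℝ) : EReal) ≤ IPM wstar := by
      rw [hIPM']
      exact le_iSup₂ (f := fun f (_ : f ∈ F) => ((V f wstar : ℝ) : EReal)) f hf
    exact EReal.coe_le_coe_iff.1 (h1.trans hwipm)
  have hVstar_abs : ∀ f ∈ F, |V f wstar| ≤ δ := by
    intro f hf
    have h1 := hVstar_le f hf
    have h2 := hVstar_le (-f) (hsymm f hf)
    have hneg : V (-f) wstar = -V f wstar := by
      simp only [hV, Pi.neg_apply]
      have e1 : ∫ x, -f x ∂Q = -∫ x, f x ∂Q := by rw [integral_neg]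
      have e2 : ∫ x, -f x * wstar x ∂P = -∫ x, f x * wstar x ∂P := by
        simp_rw [neg_mul]; rw [integral_neg]
      rw [e1, e2]; ring
    rw [hneg] at h2
    exact abs_le.2 ⟨by linarith, h1⟩
  -- finiteness of IPM on Memℒp functions
  have hub : ∀ (w : X → ℝ) (hw : MemLp w 2 P), ∀ f ∈ F,
      V f w ≤ δ + C * ‖((hw2.sub hw).toLp _ : Lp ℝ 2 P)‖ := by
    intro w hw f hf
    have hdiff : MemLp (wstar - w) 2 P := hw2.sub hw
    have hcs := stmt16_cs (hF f hf).1 hdiff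
    have hVeq : V f w = V f wstar + ∫ x, f x * (wstar - w) x ∂P := by
      simp only [hV, Pi.sub_apply]
      have : ∫ x, f x * (wstar x - w x) ∂P
          = (∫ x, f x * wstar x ∂P) - ∫ x, f x * w x ∂P := by
        simp_rw [mul_sub]
        exact integral_sub (stmt16_int_mul (hF f hf).1 hw2) (stmt16_int_mul (hF f hf).1 hw)
      rw [this]; ring
    have h1 : ∫ x, f x * (wstar - w) x ∂P ≤ C * ‖(hdiff.toLp _ : Lp ℝ 2 P)‖ := by
      have := (abs_le.1 hcs).2
      have hC' : ‖((hF f hf).1.toLp f : Lp ℝ 2 P)‖ * ‖(hdiff.toLp _ : Lp ℝ 2 P)‖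
          ≤ C * ‖(hdiff.toLp _ : Lp ℝ 2 P)‖ :=
        mul_le_mul_of_nonneg_right (hnorm f hf) (norm_nonneg _)
      exact this.trans hC'
    have h2 := hVstar_le f hf
    rw [hVeq]; exact add_le_add h2 h1
  have hfin : ∀ (w : X → ℝ), MemLp w 2 P → IPM w ≠ ⊤ ∧ IPM w ≠ ⊥ := by
    intro w hw
    constructor
    · have : IPM w ≤ ((δ + C * ‖((hw2.sub hw).toLp _ : Lp ℝ 2 P)‖ : ℝ) : EReal) := by
        rw [hIPM']
        exact iSup₂_le fun f hf => EReal.coe_le_coe_iff.2 (hub w hw f hf)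
      exact (lt_of_le_of_lt this (EReal.coe_lt_top _)).ne
    · have : ((V f0 w : ℝ) : EReal) ≤ IPM w := by
        rw [hIPM']
        exact le_iSup₂ (f := fun f (_ : f ∈ F) => ((V f w : ℝ) : EReal)) f0 hf0
      exact (lt_of_lt_of_le (EReal.bot_lt_coe _) this).ne'
  -- real value of IPM
  set r : (X → ℝ) → ℝ := fun w => (IPM w).toReal with hr
  have hreq : ∀ (w : X → ℝ), MemLp w 2 P → IPM w = ((r w : ℝ) : EReal) := by
    intro w hw
    exact (EReal.coe_toReal (hfin w hw).1 (hfin w hw).2).symm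
  have hVler : ∀ (w : X → ℝ) (hw : MemLp w 2 P), ∀ f ∈ F, V f w ≤ r w := by
    intro w hw f hf
    have h1 : ((V f w : ℝ) : EReal) ≤ IPM w := by
      rw [hIPM']
      exact le_iSup₂ (f := fun f (_ : f ∈ F) => ((V f w : ℝ) : EReal)) f hf
    rw [hreq w hw] at h1
    exact EReal.coe_le_coe_iff.1 h1
  -- the key convexity fact: combinations
  have key : ∀ (w1 w2 : X → ℝ), MemLp w1 2 P → (∫ x, w1 x ∂P) = 1 →
      MemLp w2 2 P → (∫ x, w2 x ∂P) = 1 → ∀ t : ℝ, 0 ≤ t → t ≤ 1 →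
      (1 - t) * r w1 + t * r w2 ≤ δ →
      D2 wstar ≤ (1 - t) * D2 w1 + t * D2 w2 := by
    intro w1 w2 hm1 hi1 hm2 hi2 t ht0 ht1 hcomb
    set wt : X → ℝ := fun x => (1 - t) * w1 x + t * w2 x with hwt
    have hmt : MemLp wt 2 P := (hm1.const_mul (1 - t)).add (hm2.const_mul t)
    have hint1 : Integrable w1 P := hm1.integrable one_le_two
    have hint2 : Integrable w2 P := hm2.integrable one_le_two
    have hit : (∫ x, wt x ∂P) = 1 := by
      rw [hwt]
      rw [integral_add (hint1.const_mul _) (hint2.const_mul _),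
        integral_const_mul, integral_const_mul, hi1, hi2]
      ring
    -- IPM bound
    have hipmt : IPM wt ≤ (δ : EReal) := by
      rw [hIPM']
      refine iSup₂_le fun f hf => ?_
      refine (EReal.coe_le_coe_iff.2 ?_).trans (le_refl _)
      have hVt : V f wt = (1 - t) * V f w1 + t * V f w2 := by
        simp only [hV]
        have : ∫ x, f x * wt x ∂P
            = (1 - t) * (∫ x, f x * w1 x ∂P) + t * ∫ x, f x * w2 x ∂P := by
          have e : ∀ x, f x * wt x = (1 - t) * (f x * w1 x) + t * (f x * w2 x) := by
            intro x; simp only [hwt]; ring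
          simp_rw [e]
          rw [integral_add ((stmt16_int_mul (hF f hf).1 hm1).const_mul _)
            ((stmt16_int_mul (hF f hf).1 hm2).const_mul _),
            integral_const_mul, integral_const_mul]
        rw [this]; ring
      have h1 := hVler w1 hm1 f hf
      have h2 := hVler w2 hm2 f hf
      have : V f wt ≤ (1 - t) * r w1 + t * r w2 := by
        rw [hVt]
        have : 0 ≤ 1 - t := by linarith
        nlinarith
      linarith
    have hd2 : D2 wt ≤ (1 - t) * D2 w1 + t * D2 w2 := by
      rw [hD2]
      simp only []
      have hintt : Integrable (fun x => (wt x) ^ 2 - 1) P :=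
        hmt.integrable_sq.sub (integrable_const 1)
      have hint1' : Integrable (fun x => (1 - t) * ((w1 x) ^ 2 - 1)) P :=
        (hm1.integrable_sq.sub (integrable_const 1)).const_mul _
      have hint2' : Integrable (fun x => t * ((w2 x) ^ 2 - 1)) P :=
        (hm2.integrable_sq.sub (integrable_const 1)).const_mul _
      have hmono : (∫ x, ((wt x) ^ 2 - 1) ∂P)
          ≤ ∫ x, ((1 - t) * ((w1 x) ^ 2 - 1) + t * ((w2 x) ^ 2 - 1)) ∂P := by
        refine integral_mono hintt (hint1'.add hint2') ?_
        intro x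
        simp only [hwt]
        nlinarith [mul_nonneg (mul_nonneg ht0 (by linarith : (0:ℝ) ≤ 1 - t))
          (sq_nonneg (w1 x - w2 x))]
      rw [integral_add hint1' hint2', integral_const_mul, integral_const_mul] at hmono
      exact hmono
    have := hmin wt hmt hit hipmt
    linarith
  -- r wstar ≤ δ
  have hrstar : r wstar ≤ δ := by
    have := hwipm; rw [hreq wstar hw2] at this
    exact EReal.coe_le_coe_iff.1 this
  -- a generic consequence: D2 wstar ≤ D2 w for any feasible w with r w ≤ δ
  have hminr : ∀ (w : X → ℝ), MemLp w 2 P → (∫ x, w x ∂P) = 1 → r w ≤ δ →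
      D2 wstar ≤ D2 w := by
    intro w hw hwi hwr
    exact hmin w hw hwi (by rw [hreq w hw]; exact EReal.coe_le_coe_iff.2 hwr)
  rcases lt_or_eq_of_le hrstar with hlt | heqδ
  · -- inactive constraint: μ = 0
    refine ⟨0, le_refl 0, ?_, ?_⟩
    · rw [EReal.coe_zero, EReal.zero_mul]
    · intro w hw hwi
      rw [EReal.coe_zero, EReal.zero_mul, EReal.zero_mul, add_zero, add_zero]
      refine EReal.coe_le_coe_iff.2 ?_
      rcases le_or_gt (r w) δ with h | h
      · exact hminr w hw hwi h
      · set t : ℝ := (δ - r wstar) / (r w - r wstar) with htdef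
        have hd1 : 0 < r w - r wstar := by linarith
        have ht0 : 0 < t := div_pos (by linarith) hd1
        have ht1 : t ≤ 1 := by
          rw [div_le_one hd1]; linarith
        have hcomb : (1 - t) * r wstar + t * r w ≤ δ := by
          have : (1 - t) * r wstar + t * r w = r wstar + t * (r w - r wstar) := by ring
          rw [this, htdef, div_mul_cancel₀ _ (ne_of_gt hd1)]
          linarith
        have := key wstar w hw2 hw1 hw hwi t (le_of_lt ht0) ht1 hcomb
        nlinarith
  · -- active constraint: r wstar = δ
    -- Slater point
    have hslater : ∃ w0, (MemLp w0 2 P ∧ (∫ x, w0 x ∂P) = 1) ∧ IPM w0 < (δ : EReal) := by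
      rw [hδmin] at hδ
      obtain ⟨w0, hw0⟩ := iInf_lt_iff.1 hδ
      obtain ⟨hw0mem, hw0lt⟩ := iInf_lt_iff.1 hw0
      exact ⟨w0, hw0mem, hw0lt⟩
    obtain ⟨w0, ⟨hw0m, hw0i⟩, hw0lt⟩ := hslater
    have hr0 : r w0 < δ := by
      rw [hreq w0 hw0m] at hw0lt
      exact EReal.coe_lt_coe_iff.1 hw0lt
    have hD0 : D2 wstar ≤ D2 w0 := hminr w0 hw0m hw0i (le_of_lt hr0)
    -- cross inequality
    have cross : ∀ (w1 : X → ℝ), MemLp w1 2 P → (∫ x, w1 x ∂P) = 1 → δ < r w1 →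
        ∀ (w2 : X → ℝ), MemLp w2 2 P → (∫ x, w2 x ∂P) = 1 → r w2 < δ →
        (D2 wstar - D2 w1) / (r w1 - δ) ≤ (D2 w2 - D2 wstar) / (δ - r w2) := by
      intro w1 hm1 hi1 hr1 w2 hm2 hi2 hr2
      set t : ℝ := (r w1 - δ) / (r w1 - r w2) with htdef
      have hd : 0 < r w1 - r w2 := by linarith
      have ht0 : 0 < t := div_pos (by linarith) hd
      have ht1 : t < 1 := by rw [div_lt_one hd]; linarith
      have htmul : t * (r w1 - r w2) = r w1 - δ := div_mul_cancel₀ _ (ne_of_gt hd)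
      have h2mul : (1 - t) * (r w1 - r w2) = δ - r w2 := by linear_combination -htmul
      have hcomb : (1 - t) * r w1 + t * r w2 ≤ δ := by nlinarith
      have hkey := key w1 w2 hm1 hi1 hm2 hi2 t (le_of_lt ht0) (le_of_lt ht1) hcomb
      rw [div_le_div_iff₀ (by linarith) (by linarith), ← htmul, ← h2mul]
      nlinarith [mul_le_mul_of_nonneg_left hkey (le_of_lt hd)]
    -- the multiplier set
    set s : Set ℝ := insert 0 {q | ∃ w, MemLp w 2 P ∧ (∫ x, w x ∂P) = 1 ∧ δ < r w ∧
        q = (D2 wstar - D2 w) / (r w - δ)} with hs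
    have hsne : s.Nonempty := ⟨0, Set.mem_insert 0 _⟩
    have hB : ∀ q ∈ s, q ≤ (D2 w0 - D2 wstar) / (δ - r w0) := by
      intro q hq
      rcases hq with hq | ⟨w1, hm1, hi1, hr1, hq⟩
      · rw [hq]
        exact div_nonneg (by linarith) (by linarith)
      · rw [hq]
        exact cross w1 hm1 hi1 hr1 w0 hw0m hw0i hr0
    have hsbdd : BddAbove s := ⟨_, hB⟩
    set μ : ℝ := sSup s with hμ
    have hμ0 : 0 ≤ μ := le_csSup hsbdd (Set.mem_insert 0 _)
    refine ⟨μ, hμ0, ?_, ?_⟩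
    · rw [hreq wstar hw2, heqδ, ← EReal.coe_sub, sub_self, EReal.coe_zero, mul_zero]
    · intro w hw hwi
      rw [hreq wstar hw2, hreq w hw, ← EReal.coe_mul, ← EReal.coe_mul,
        ← EReal.coe_add, ← EReal.coe_add]
      refine EReal.coe_le_coe_iff.2 ?_
      rw [heqδ]
      -- goal: D2 wstar + μ * δ ≤ D2 w + μ * r w
      rcases lt_trichotomy (r w) δ with h | h | h
      · have hμle : μ ≤ (D2 w - D2 wstar) / (δ - r w) := by
          refine csSup_le hsne ?_
          intro q hq
          rcases hq with hq | ⟨w1, hm1, hi1, hr1, hq⟩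
          · rw [hq]
            have := hminr w hw hwi (le_of_lt h)
            exact div_nonneg (by linarith) (by linarith)
          · rw [hq]
            exact cross w1 hm1 hi1 hr1 w hw hwi h
        have hd : 0 < δ - r w := by linarith
        rw [le_div_iff₀ hd] at hμle
        nlinarith
      · have := hminr w hw hwi (le_of_eq h)
        rw [h]; linarith
      · have hmem : (D2 wstar - D2 w) / (r w - δ) ∈ s :=
          Set.mem_insert_of_mem _ ⟨w, hw, hwi, h, rfl⟩
        have hle : (D2 wstar - D2 w) / (r w - δ) ≤ μ := le_csSup hsbdd hmem
        have hd : 0 < r w - δ := by linarith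
        rw [div_le_iff₀ hd] at hle
        nlinarith
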